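/- Let C ⊆ E be a closed convex set and let F ⊴ C be a face. The following are equivalent: (i) F is an amenable face of C, i.e., for every bounded set B ⊆ E there exists κ > 0 such that dist(x, F) ≤ κ·dist(x, C) for all x ∈ aff(F) ∩ B; (ii) C and aff(F) are boundedly linearly regular, i.e., for every bounded set B ⊆ E there exists κ_B > 0 such that dist(x, F) ≤ κ_B · max{dist(x, aff(F)), dist(x, C)} for all x ∈ B; (iii) C and aff(F) are subtransversal at every point of F, i.e., for every x* ∈ F there exist a neighbourhood U of x* and κ > 0 such that dist(x, F) ≤ κ·(dist(x, C) + dist(x, aff(F))) for all x ∈ U. -/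

import Mathlib

open Metric Bornology

/-- `F` is a face of the convex set `C`. -/
def IsFace {E : Type*} [NormedAddCommGroup E] [NormedSpace ℝ E] (C F : Set E) : Prop :=
  IsClosed F ∧ Convex ℝ F ∧ F ⊆ C ∧
    ∀ x ∈ C, ∀ y ∈ C, ∀ α : ℝ, 0 < α → α < 1 → α • x + (1 - α) • y ∈ F → x ∈ F ∧ y ∈ F

lemma IsFace.inter_affineSpan_subset {E : Type*} [NormedAddCommGroup E] [InnerProductSpace ℝ E]
    [FiniteDimensional ℝ E] {C F : Set E} (hF : IsFace C F) :
    C ∩ (affineSpan ℝ F : Set E) ⊆ F := by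
  obtain ⟨hFcl, hFcv, hFC, hface⟩ := hF
  rcases F.eq_empty_or_nonempty with rfl | hne
  · simp
  obtain ⟨z, hz⟩ := hne.intrinsicInterior hFcv
  have hzF : z ∈ F := intrinsicInterior_subset hz
  rintro x ⟨hxC, hxA⟩
  obtain ⟨z', hz', hz'e⟩ := mem_intrinsicInterior.1 hz
  rcases eq_or_ne x z with rfl | hxz
  · exact hzF
  obtain ⟨ε, hε, hball'⟩ := Metric.isOpen_iff.1 isOpen_interior z' hz'
  have hball := hball'.trans interior_subset
  have hnorm : (0:ℝ) < ‖z - x‖ := by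
    rw [norm_sub_pos_iff]; exact fun h => hxz h.symm
  set δ : ℝ := ε / (2 * ‖z - x‖) with hδdef
  have hδ : 0 < δ := by positivity
  set w : E := δ • (z - x) + z with hwdef
  have hwA : w ∈ affineSpan ℝ F := by
    have hzA : z ∈ affineSpan ℝ F := subset_affineSpan ℝ F hzF
    exact AffineSubspace.smul_vsub_vadd_mem _ δ hzA hxA hzA
  have hwF : w ∈ F := by
    have : (⟨w, hwA⟩ : affineSpan ℝ F) ∈ Metric.ball z' ε := by
      rw [Metric.mem_ball, Subtype.dist_eq, hz'e]
      have : dist w z = δ * ‖z - x‖ := by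
        rw [dist_eq_norm]; simp [hwdef, norm_smul, abs_of_pos hδ]
      have h2 : δ * ‖z - x‖ = ε / 2 := by
        rw [hδdef]; field_simp
      rw [this, h2]; linarith
    exact hball this
  -- z is a strict convex combination of x and w
  set α : ℝ := δ / (1 + δ) with hαdef
  have h1δ : (0:ℝ) < 1 + δ := by linarith
  have hα0 : 0 < α := by positivity
  have hα1 : α < 1 := by rw [hαdef, div_lt_one h1δ]; linarith
  have hcomb : α • x + (1 - α) • w ∈ F := by
    have : α • x + (1 - α) • w = z := by
      rw [hwdef, hαdef]
      match_scalars <;> (field_simp; try ring)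
    rw [this]; exact hzF
  exact (hface x hxC w (hFC hwF) α hα0 hα1 hcomb).1

/-- Proposition 3.2: equivalence between amenability of a face, bounded linear
regularity of `C` and `aff F`, and subtransversality of `C` and `aff F` at every
point of `F`. -/
theorem amenable_face_equivalences {E : Type*} [NormedAddCommGroup E] [InnerProductSpace ℝ E]
    [FiniteDimensional ℝ E] (C F : Set E)
    (hCcl : IsClosed C) (hCcv : Convex ℝ C) (hF : IsFace C F) :
    -- (i) F is an amenable face of C
    ((∀ B : Set E, IsBounded B → ∃ κ > (0:ℝ),
        ∀ x ∈ (affineSpan ℝ F : Set E) ∩ B, infDist x F ≤ κ * infDist x C) ↔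
    -- (ii) C and aff F are boundedly linearly regular
      (∀ B : Set E, IsBounded B → ∃ κ > (0:ℝ),
        ∀ x ∈ B, infDist x F ≤ κ * max (infDist x (affineSpan ℝ F : Set E)) (infDist x C)))
    ∧
    -- (ii) ↔ (iii) C and aff F are subtransversal at every point of F
    ((∀ B : Set E, IsBounded B → ∃ κ > (0:ℝ),
        ∀ x ∈ B, infDist x F ≤ κ * max (infDist x (affineSpan ℝ F : Set E)) (infDist x C)) ↔
      (∀ xs ∈ F, ∃ U ∈ nhds xs, ∃ κ > (0:ℝ),
        ∀ x ∈ U, infDist x F ≤ κ * (infDist x C + infDist x (affineSpan ℝ F : Set E)))) := by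
  have hspan_closed : IsClosed (affineSpan ℝ F : Set E) :=
    (affineSpan ℝ F).closed_of_finiteDimensional
  rcases F.eq_empty_or_nonempty with rfl | hFne
  · refine ⟨⟨fun _ B hB => ⟨1, one_pos, fun x hx => ?_⟩,
      fun _ B hB => ⟨1, one_pos, fun x hx => ?_⟩⟩,
      ⟨fun _ xs hxs => absurd hxs (Set.notMem_empty xs),
       fun _ B hB => ⟨1, one_pos, fun x hx => ?_⟩⟩⟩
    · simp only [Metric.infDist_empty, one_mul]
      exact le_max_of_le_right Metric.infDist_nonneg
    · simp only [Metric.infDist_empty, one_mul]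
      exact Metric.infDist_nonneg
    · simp only [Metric.infDist_empty, one_mul]
      exact le_max_of_le_right Metric.infDist_nonneg
  obtain ⟨f0, hf0⟩ := hFne
  have hf0A : f0 ∈ affineSpan ℝ F := subset_affineSpan ℝ F hf0
  have hAspan_ne : (affineSpan ℝ F : Set E).Nonempty := ⟨f0, hf0A⟩
  refine ⟨⟨?_, ?_⟩, ?_, ?_⟩
  · -- (i) → (ii)
    intro hi B hB
    obtain ⟨R, hR⟩ := hB.subset_closedBall 0
    obtain ⟨κ, hκ, hbound⟩ := hi (Metric.closedBall 0 (2*R + ‖f0‖)) isBounded_closedBall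
    refine ⟨2*κ + 1, by positivity, fun x hxB => ?_⟩
    obtain ⟨p, hpA, hp⟩ := hspan_closed.exists_infDist_eq_dist hAspan_ne x
    have hxR : ‖x‖ ≤ R := by simpa using hR hxB
    have hdxf0 : dist x p ≤ dist x f0 := hp ▸ Metric.infDist_le_dist_of_mem hf0A
    have hpball : p ∈ Metric.closedBall 0 (2*R + ‖f0‖) := by
      rw [Metric.mem_closedBall, dist_zero_right]
      have h1 : ‖p‖ - ‖x‖ ≤ ‖p - x‖ := norm_sub_norm_le _ _
      have h2 : ‖p - x‖ = dist x p := by rw [dist_comm, dist_eq_norm]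
      have h3 : dist x f0 ≤ ‖x‖ + ‖f0‖ := by
        rw [dist_eq_norm]; exact norm_sub_le _ _
      nlinarith
    have h1 := hbound p ⟨hpA, hpball⟩
    have h2 : infDist x F ≤ infDist p F + dist x p := Metric.infDist_le_infDist_add_dist
    have h3 : infDist p C ≤ infDist x C + dist p x := Metric.infDist_le_infDist_add_dist
    rw [dist_comm p x] at h3
    have hdA : dist x p = infDist x (affineSpan ℝ F : Set E) := hp.symm
    have hmax1 : infDist x (affineSpan ℝ F : Set E)
        ≤ max (infDist x (affineSpan ℝ F : Set E)) (infDist x C) := le_max_left _ _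
    have hmax2 : infDist x C
        ≤ max (infDist x (affineSpan ℝ F : Set E)) (infDist x C) := le_max_right _ _
    nlinarith [mul_le_mul_of_nonneg_left hmax2 hκ.le,
      mul_le_mul_of_nonneg_left hmax1 (by positivity : (0:ℝ) ≤ κ + 1)]
  · -- (ii) → (i)
    intro hii B hB
    obtain ⟨κ, hκ, hbound⟩ := hii B hB
    refine ⟨κ, hκ, fun x hx => ?_⟩
    have := hbound x hx.2
    rwa [Metric.infDist_zero_of_mem hx.1, max_eq_right Metric.infDist_nonneg] at this
  · -- (ii) → (iii)
    intro hii xs hxs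
    obtain ⟨κ, hκ, hbound⟩ := hii (Metric.ball xs 1) isBounded_ball
    refine ⟨Metric.ball xs 1, Metric.ball_mem_nhds xs one_pos, κ, hκ, fun x hx => ?_⟩
    have h1 := hbound x hx
    have hle : max (infDist x (affineSpan ℝ F : Set E)) (infDist x C)
        ≤ infDist x C + infDist x (affineSpan ℝ F : Set E) :=
      max_le (le_add_of_nonneg_left Metric.infDist_nonneg)
        (le_add_of_nonneg_right Metric.infDist_nonneg)
    nlinarith [mul_le_mul_of_nonneg_left hle hκ.le]
  · -- (iii) → (ii)
    intro hiii B hB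
    by_contra hcon
    push_neg at hcon
    have hseq : ∀ n : ℕ, ∃ x ∈ B, ((n:ℝ)+1) *
        max (infDist x (affineSpan ℝ F : Set E)) (infDist x C) < infDist x F :=
      fun n => hcon ((n:ℝ)+1) (by positivity)
    choose x hxB hxlt using hseq
    obtain ⟨R, hR⟩ := hB.subset_closedBall f0
    have hdF : ∀ n, infDist (x n) F ≤ R := fun n =>
      le_trans (Metric.infDist_le_dist_of_mem hf0) (Metric.mem_closedBall.1 (hR (hxB n)))
    have hmaxle : ∀ n : ℕ,
        max (infDist (x n) (affineSpan ℝ F : Set E)) (infDist (x n) C) ≤ R / ((n:ℝ)+1) := by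
      intro n
      rw [le_div_iff₀ (by positivity : (0:ℝ) < (n:ℝ)+1)]
      nlinarith [hxlt n, hdF n]
    obtain ⟨xb, hxbcl, φ, hφ, hconv⟩ := tendsto_subseq_of_bounded hB hxB
    have hφn : ∀ n : ℕ, (n:ℝ) ≤ (φ n : ℝ) := fun n => Nat.cast_le.2 hφ.le_apply
    have htend0 : Filter.Tendsto (fun n : ℕ => R / ((φ n : ℝ)+1)) Filter.atTop (nhds 0) := by
      have h1 : Filter.Tendsto (fun n : ℕ => R / ((n:ℝ)+1)) Filter.atTop (nhds 0) := by
        simpa [mul_one_div, div_eq_mul_inv] using tendsto_one_div_add_atTop_nhds_zero_nat.const_mul R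
      exact h1.comp hφ.tendsto_atTop
    have hC0 : infDist xb C = 0 := by
      have hd : Filter.Tendsto (fun n => infDist (x (φ n)) C) Filter.atTop
          (nhds (infDist xb C)) := ((Metric.continuous_infDist_pt C).tendsto xb).comp hconv
      have hle : infDist xb C ≤ 0 := le_of_tendsto_of_tendsto' hd htend0
        (fun n => (le_max_right _ _).trans (hmaxle (φ n)))
      exact le_antisymm hle Metric.infDist_nonneg
    have hA0 : infDist xb (affineSpan ℝ F : Set E) = 0 := by
      have hd : Filter.Tendsto (fun n => infDist (x (φ n)) (affineSpan ℝ F : Set E))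
          Filter.atTop (nhds (infDist xb (affineSpan ℝ F : Set E))) :=
        ((Metric.continuous_infDist_pt _).tendsto xb).comp hconv
      have hle : infDist xb (affineSpan ℝ F : Set E) ≤ 0 := le_of_tendsto_of_tendsto' hd htend0
        (fun n => (le_max_left _ _).trans (hmaxle (φ n)))
      exact le_antisymm hle Metric.infDist_nonneg
    have hxbC : xb ∈ C := (hCcl.mem_iff_infDist_zero ⟨f0, hF.2.2.1 hf0⟩).2 hC0
    have hxbA : xb ∈ (affineSpan ℝ F : Set E) :=
      (hspan_closed.mem_iff_infDist_zero hAspan_ne).2 hA0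
    have hxbF : xb ∈ F := hF.inter_affineSpan_subset ⟨hxbC, hxbA⟩
    obtain ⟨U, hU, κ, hκ, hUbound⟩ := hiii xb hxbF
    have hev1 : ∀ᶠ n in Filter.atTop, x (φ n) ∈ U := hconv hU
    have hev2 : ∀ᶠ n in Filter.atTop, 2*κ ≤ ((φ n : ℝ)+1) := by
      filter_upwards [Filter.eventually_ge_atTop ⌈2*κ⌉₊] with n hn
      calc 2*κ ≤ (⌈2*κ⌉₊ : ℝ) := Nat.le_ceil _
        _ ≤ (n : ℝ) := Nat.cast_le.2 hn
        _ ≤ (φ n : ℝ) := hφn n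
        _ ≤ (φ n : ℝ) + 1 := by linarith
    obtain ⟨n, hnU, hn2κ⟩ := (hev1.and hev2).exists
    set m := max (infDist (x (φ n)) (affineSpan ℝ F : Set E)) (infDist (x (φ n)) C) with hm
    have hm0 : 0 ≤ m := le_trans Metric.infDist_nonneg (le_max_left _ _)
    have h1 : ((φ n : ℝ)+1) * m < infDist (x (φ n)) F := hxlt (φ n)
    have h2 : infDist (x (φ n)) F ≤ κ * (infDist (x (φ n)) C
        + infDist (x (φ n)) (affineSpan ℝ F : Set E)) := hUbound _ hnU
    have h3 : infDist (x (φ n)) C + infDist (x (φ n)) (affineSpan ℝ F : Set E) ≤ 2 * m := by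
      have hA : infDist (x (φ n)) (affineSpan ℝ F : Set E) ≤ m := le_max_left _ _
      have hC : infDist (x (φ n)) C ≤ m := le_max_right _ _
      linarith
    nlinarith [mul_le_mul_of_nonneg_left h3 hκ.le, mul_le_mul_of_nonneg_right hn2κ hm0]
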